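/- Kernel of the linearized Allen–Cahn operator: Assume W satisfies the double-well assumptions and let q be the standing wave. If g : ℝ → ℝ is a bounded C² function satisfying −g''(s) + W''(q(s)) g(s) = 0 for all s ∈ ℝ, then there is a constant c ∈ ℝ such that g(s) = c q'(s) for all s ∈ ℝ. -/

import Mathlib

open Set Filter Topology

noncomputable section

def DoubleWell (W : ℝ → ℝ) : Prop :=
  ContDiff ℝ 3 W ∧
  (∀ u ∈ Set.Icc (-1:ℝ) 1, 0 ≤ W u) ∧
  W (-1) = 0 ∧ W 1 = 0 ∧
  (∀ u ∈ Set.Ioo (-1:ℝ) 1, 0 < W u) ∧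
  deriv W (-1) = 0 ∧ deriv W 0 = 0 ∧ deriv W 1 = 0 ∧
  (∀ u ∈ Set.Ioo (-1:ℝ) 0, 0 < deriv W u) ∧
  (∀ u ∈ Set.Ioo (0:ℝ) 1, deriv W u < 0) ∧
  0 < deriv (deriv W) (-1) ∧ 0 < deriv (deriv W) 1 ∧ deriv (deriv W) 0 < 0

def StandingWave (W q : ℝ → ℝ) : Prop :=
  ContDiff ℝ 2 q ∧ StrictMono q ∧ (∀ s, q s ∈ Set.Ioo (-1:ℝ) 1) ∧ q 0 = 0 ∧
  (∀ s, deriv (deriv q) s = deriv W (q s)) ∧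
  Filter.Tendsto q Filter.atTop (nhds 1) ∧ Filter.Tendsto q Filter.atBot (nhds (-1))

/-- The kernel of the linearized Allen–Cahn operator among bounded C² functions
is spanned by q'. -/
theorem kernel_linearized_allen_cahn (W q : ℝ → ℝ) (hW : DoubleWell W)
    (hq : StandingWave W q) (g : ℝ → ℝ) (hgb : ∃ B : ℝ, ∀ s, |g s| ≤ B)
    (hgs : ContDiff ℝ 2 g)
    (hode : ∀ s : ℝ, -deriv (deriv g) s + deriv (deriv W) (q s) * g s = 0) :
    ∃ c : ℝ, ∀ s : ℝ, g s = c * deriv q s := by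
  obtain ⟨hW3, -, -, hW1, hWpos, -, -, hdW1, -, -, -, -, -⟩ := hW
  obtain ⟨hq2, hqmono, hqIoo, hq00, hqode, hqtop, -⟩ := hq
  obtain ⟨B, hB⟩ := hgb
  have hBnn : 0 ≤ B := le_trans (abs_nonneg _) (hB 0)
  -- regularity facts
  have hWd : Differentiable ℝ W := hW3.differentiable (by norm_num)
  have hW'2 : ContDiff ℝ 2 (deriv W) :=
    ((contDiff_succ_iff_deriv (n := 2)).mp (by exact_mod_cast hW3)).2.2
  have hW'd : Differentiable ℝ (deriv W) := hW'2.differentiable (by norm_num)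
  have hW'c : Continuous (deriv W) := hW'd.continuous
  have hqd : Differentiable ℝ q := hq2.differentiable (by norm_num)
  have hq'd : Differentiable ℝ (deriv q) :=
    (((contDiff_succ_iff_deriv (n := 1)).mp (by exact_mod_cast hq2)).2.2).differentiable (by norm_num)
  have hgd : Differentiable ℝ g := hgs.differentiable (by norm_num)
  have hg'd : Differentiable ℝ (deriv g) :=
    (((contDiff_succ_iff_deriv (n := 1)).mp (by exact_mod_cast hgs)).2.2).differentiable (by norm_num)
  -- derivatives as HasDerivAt
  have hqD : ∀ s, HasDerivAt q (deriv q s) s := fun s => (hqd s).hasDerivAt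
  have hq'D : ∀ s, HasDerivAt (deriv q) (deriv W (q s)) s := by
    intro s
    have := (hq'd s).hasDerivAt
    rwa [hqode s] at this
  have hgD : ∀ s, HasDerivAt g (deriv g s) s := fun s => (hgd s).hasDerivAt
  have hg'D : ∀ s, HasDerivAt (deriv g) (deriv (deriv W) (q s) * g s) s := by
    intro s
    have h1 : deriv (deriv g) s = deriv (deriv W) (q s) * g s := by
      have := hode s; linarith
    have := (hg'd s).hasDerivAt
    rwa [h1] at this
  have hWqD : ∀ s, HasDerivAt (fun t => W (q t)) (deriv W (q s) * deriv q s) s := by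
    intro s
    exact (hWd (q s)).hasDerivAt.comp s (hqD s)
  have hW'qD : ∀ s, HasDerivAt (fun t => deriv W (q t)) (deriv (deriv W) (q s) * deriv q s) s := by
    intro s
    exact (hW'd (q s)).hasDerivAt.comp s (hqD s)
  -- energy identity: (q')^2 - 2 W(q) constant
  set E : ℝ := (deriv q 0)^2 - 2 * W (q 0) with hEdef
  have hEder : ∀ x : ℝ, HasDerivAt (fun s => (deriv q s)^2 - 2 * W (q s)) 0 x := by
    intro x
    have h1 : HasDerivAt (fun s => (deriv q s)^2)
        ((2 : ℕ) * (deriv q x) ^ 1 * deriv W (q x)) x := (hq'D x).pow 2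
    have h2 := (hWqD x).const_mul (2 : ℝ)
    have := h1.sub h2
    refine this.congr_deriv ?_
    push_cast; ring
  have hEc : ∀ s : ℝ, (deriv q s)^2 - 2 * W (q s) = E := by
    intro s
    exact is_const_of_deriv_eq_zero (fun x => (hEder x).differentiableAt)
      (fun x => (hEder x).deriv) s 0
  -- q' ≥ 0
  have hq'nonneg : ∀ s, 0 ≤ deriv q s := by
    intro s
    have htend : Tendsto (slope q s) (𝓝[>] s) (𝓝 (deriv q s)) :=
      (hasDerivAt_iff_tendsto_slope.mp (hqD s)).mono_left
        (nhdsWithin_mono s fun y hy => ne_of_gt hy)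
    refine ge_of_tendsto htend ?_
    filter_upwards [self_mem_nhdsWithin] with y hy
    have hy' : s < y := hy
    rw [slope_def_field]
    have := (hqmono hy').le
    have h2 : (0:ℝ) < y - s := by linarith
    exact div_nonneg (by linarith) h2.le
  -- W(q s) → 0 at top
  have hWq0 : Tendsto (fun s => W (q s)) atTop (𝓝 0) := by
    have := (hWd.continuous.tendsto 1).comp hqtop
    rwa [hW1] at this
  -- (q')^2 → E at top
  have hq'sqtend : Tendsto (fun s => (deriv q s)^2) atTop (𝓝 E) := by
    have h1 : Tendsto (fun s => 2 * W (q s) + E) atTop (𝓝 (2 * 0 + E)) :=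
      (hWq0.const_mul 2).add tendsto_const_nhds
    have h2 : (fun s => (deriv q s)^2) = fun s => 2 * W (q s) + E := by
      funext s; have := hEc s; linarith
    rw [h2]
    simpa using h1
  -- E ≥ 0
  have hEnn : 0 ≤ E := ge_of_tendsto hq'sqtend (by filter_upwards with s; exact sq_nonneg _)
  -- E = 0
  have hE0 : E = 0 := by
    by_contra hne
    have hEpos : 0 < E := lt_of_le_of_ne hEnn (Ne.symm hne)
    set δ : ℝ := Real.sqrt (E / 2) with hδdef
    have hδpos : 0 < δ := Real.sqrt_pos.mpr (by linarith)
    have hev : ∀ᶠ s in atTop, E / 2 < (deriv q s)^2 :=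
      hq'sqtend.eventually (eventually_gt_nhds (by linarith))
    obtain ⟨T, hT⟩ := hev.exists_forall_of_atTop
    have hlow : ∀ s, T ≤ s → δ ≤ deriv q s := by
      intro s hs
      have := hT s hs
      have h1 : δ ≤ Real.sqrt ((deriv q s)^2) := Real.sqrt_le_sqrt this.le
      rwa [Real.sqrt_sq (hq'nonneg s)] at h1
    have hab : T < T + 4 / δ := by
      have : (0:ℝ) < 4 / δ := by positivity
      linarith
    obtain ⟨c, hc, hceq⟩ := exists_deriv_eq_slope q hab hqd.continuous.continuousOn
      hqd.differentiableOn
    have hc1 : δ ≤ deriv q c := hlow c hc.1.le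
    have hq1 : q (T + 4 / δ) - q T < 2 := by
      have h1 := hqIoo (T + 4 / δ)
      have h2 := hqIoo T
      have := h1.2
      have := h2.1
      linarith
    rw [hceq] at hc1
    have hd : (T + 4 / δ) - T = 4 / δ := by ring
    rw [hd] at hc1
    have h4 : (4 : ℝ) ≤ q (T + 4 / δ) - q T := by
      have h5 : δ * (4 / δ) ≤ (q (T + 4 / δ) - q T) / (4 / δ) * (4 / δ) := by
        apply mul_le_mul_of_nonneg_right hc1 (by positivity)
      rw [mul_div_cancel₀ _ (ne_of_gt hδpos)] at h5
      rwa [div_mul_cancel₀ _ (by positivity : (4:ℝ)/δ ≠ 0)] at h5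
    linarith
  -- q' > 0 everywhere
  have hq'pos : ∀ s, 0 < deriv q s := by
    intro s
    have hWq : 0 < W (q s) := hWpos (q s) (hqIoo s)
    have hsq : (deriv q s)^2 = 2 * W (q s) := by have := hEc s; rw [hE0] at this; linarith
    have hne : deriv q s ≠ 0 := by
      intro h
      rw [h] at hsq
      simp at hsq
      linarith
    exact lt_of_le_of_ne (hq'nonneg s) (Ne.symm hne)
  -- Wronskian
  set ω : ℝ → ℝ := fun s => deriv g s * deriv q s - g s * deriv W (q s) with hωdef
  have hωD : ∀ s, HasDerivAt ω 0 s := by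
    intro s
    have h1 := (hg'D s).mul (hq'D s)
    have h2 := (hgD s).mul (hW'qD s)
    have := h1.sub h2
    refine this.congr_deriv ?_
    ring
  have hωc : ∀ s, ω s = ω 0 :=
    fun s => is_const_of_deriv_eq_zero (fun x => (hωD x).differentiableAt)
      (fun x => (hωD x).deriv) s 0
  -- q' → 0 at top
  have hq'tend : Tendsto (deriv q) atTop (𝓝 0) := by
    have h1 : Tendsto (fun s => Real.sqrt (2 * W (q s))) atTop (𝓝 (Real.sqrt (2 * 0))) :=
      (Real.continuous_sqrt.tendsto _).comp (hWq0.const_mul 2)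
    have h2 : (deriv q) = fun s => Real.sqrt (2 * W (q s)) := by
      funext s
      have hsq : (deriv q s)^2 = 2 * W (q s) := by have := hEc s; rw [hE0] at this; linarith
      rw [← hsq, Real.sqrt_sq (hq'nonneg s)]
    rw [h2]
    simpa using h1
  -- q'' = W'(q) → 0 at top
  have hq''tend : Tendsto (fun s => deriv W (q s)) atTop (𝓝 0) := by
    have := (hW'c.tendsto 1).comp hqtop
    rwa [hdW1] at this
  -- MVT sequence with bounded g'
  have hmvt : ∀ n : ℕ, ∃ c ∈ Ioo (n:ℝ) ((n:ℝ)+1),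
      deriv g c = (g ((n:ℝ)+1) - g (n:ℝ)) / (((n:ℝ)+1) - (n:ℝ)) := fun n =>
    exists_deriv_eq_slope g (by linarith) hgd.continuous.continuousOn hgd.differentiableOn
  choose t ht hts using hmvt
  have htb : ∀ n, |deriv g (t n)| ≤ 2 * B := by
    intro n
    rw [hts n]
    have h1 : ((n:ℝ)+1) - (n:ℝ) = 1 := by ring
    rw [h1, div_one]
    calc |g ((n:ℝ)+1) - g (n:ℝ)| ≤ |g ((n:ℝ)+1)| + |g (n:ℝ)| := abs_sub _ _
      _ ≤ B + B := add_le_add (hB _) (hB _)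
      _ = 2 * B := by ring
  have httop : Tendsto t atTop atTop :=
    tendsto_atTop_mono (fun n => (ht n).1.le) tendsto_natCast_atTop_atTop
  -- ω(t n) → 0
  have hωtend : Tendsto (fun n => ω (t n)) atTop (𝓝 0) := by
    apply squeeze_zero_norm (a := fun n => 2 * B * |deriv q (t n)| + B * |deriv W (q (t n))|)
    · intro n
      have h1 : |deriv g (t n) * deriv q (t n)| ≤ 2 * B * |deriv q (t n)| := by
        rw [abs_mul]
        exact mul_le_mul_of_nonneg_right (htb n) (abs_nonneg _)
      have h2 : |g (t n) * deriv W (q (t n))| ≤ B * |deriv W (q (t n))| := by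
        rw [abs_mul]
        exact mul_le_mul_of_nonneg_right (hB _) (abs_nonneg _)
      calc ‖ω (t n)‖ ≤ |deriv g (t n) * deriv q (t n)| + |g (t n) * deriv W (q (t n))| :=
            abs_sub _ _
        _ ≤ 2 * B * |deriv q (t n)| + B * |deriv W (q (t n))| := add_le_add h1 h2
    · have h1 : Tendsto (fun n => |deriv q (t n)|) atTop (𝓝 0) := by
        simpa using ((hq'tend.comp httop).abs)
      have h2 : Tendsto (fun n => |deriv W (q (t n))|) atTop (𝓝 0) := by
        simpa using ((hq''tend.comp httop).abs)
      have := (h1.const_mul (2*B)).add (h2.const_mul B)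
      simpa using this
  -- ω ≡ 0
  have hω0 : ∀ s, ω s = 0 := by
    have h1 : Tendsto (fun n => ω (t n)) atTop (𝓝 (ω 0)) := by
      have : (fun n => ω (t n)) = fun _ => ω 0 := funext fun n => hωc (t n)
      rw [this]; exact tendsto_const_nhds
    have := tendsto_nhds_unique h1 hωtend
    intro s; rw [hωc s, this]
  -- conclude
  refine ⟨g 0 / deriv q 0, fun s => ?_⟩
  have hhD : ∀ x : ℝ, HasDerivAt (fun t => g t / deriv q t) 0 x := by
    intro x
    have := (hgD x).div (hq'D x) (ne_of_gt (hq'pos x))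
    have h0 : (deriv g x * deriv q x - g x * deriv W (q x)) / (deriv q x)^2 = 0 := by
      rw [show deriv g x * deriv q x - g x * deriv W (q x) = 0 from hω0 x]; simp
    rwa [h0] at this
  have hc : g s / deriv q s = g 0 / deriv q 0 :=
    is_const_of_deriv_eq_zero (fun x => (hhD x).differentiableAt)
      (fun x => (hhD x).deriv) s 0
  rw [div_eq_div_iff (ne_of_gt (hq'pos s)) (ne_of_gt (hq'pos 0))] at hc
  rw [div_mul_eq_mul_div, eq_div_iff (ne_of_gt (hq'pos 0))]
  linear_combination hc

end
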